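/- For real numbers b, c with c > 1 and b - c + 1 > 0, and 0 < x < 1, the Gauss hypergeometric function satisfies ₂F₁(1, b; c; x) = (c-1) (1-x)^{c-b-1} x^{1-c} B(c-1, b-c+1, x), where B is the incomplete beta function. -/

import Mathlib

open Filter Topology Set

section HgAux

noncomputable def hgA (b c : ℝ) (k : ℕ) : ℝ :=
  (ascPochhammer ℝ k).eval b / (ascPochhammer ℝ k).eval c

lemma hgA_zero (b c : ℝ) : hgA b c 0 = 1 := by simp [hgA]

lemma hgA_pos {b c : ℝ} (hb : 0 < b) (hc : 0 < c) (k : ℕ) : 0 < hgA b c k :=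
  div_pos (ascPochhammer_pos k b hb) (ascPochhammer_pos k c hc)

lemma hgA_rec {b c : ℝ} (hb : 0 < b) (hc : 0 < c) (k : ℕ) :
    (c + k) * hgA b c (k + 1) = (b + k) * hgA b c k := by
  have h1 := ascPochhammer_pos k b hb
  have h2 := ascPochhammer_pos k c hc
  have h3 : c + (k:ℝ) ≠ 0 := by positivity
  rw [hgA, hgA, ascPochhammer_succ_eval, ascPochhammer_succ_eval]
  field_simp

lemma hgA_ratio {b c : ℝ} (hb : 0 < b) (hc : 0 < c) (k : ℕ) :
    hgA b c (k + 1) = (b + k) / (c + k) * hgA b c k := by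
  have h3 : c + (k:ℝ) ≠ 0 := by positivity
  field_simp
  linarith [hgA_rec hb hc k]

lemma tendsto_ratio_aux (u v : ℝ) (hv : 0 < v) :
    Tendsto (fun n : ℕ => (u + n) / (v + n)) atTop (𝓝 1) := by
  have h1 : Tendsto (fun n : ℕ => (v + (n:ℝ))) atTop atTop :=
    tendsto_atTop_add_const_left _ v tendsto_natCast_atTop_atTop
  have h2 : Tendsto (fun n : ℕ => (u - v) / (v + n)) atTop (𝓝 0) :=
    Tendsto.div_atTop tendsto_const_nhds h1
  have h3 : Tendsto (fun n : ℕ => 1 + (u - v) / (v + n)) atTop (𝓝 (1 + 0)) :=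
    tendsto_const_nhds.add h2
  rw [add_zero] at h3
  refine h3.congr' ?_
  filter_upwards [h1.eventually_gt_atTop 0] with n hn
  field_simp
  ring

/-- master summability lemma -/
lemma hg_summable_master {b c : ℝ} (hb : 0 < b) (hc : 0 < c) {y : ℝ} (hy : |y| < 1) :
    Summable (fun n : ℕ => ((n : ℝ) + 1) * hgA b c n * y ^ n) := by
  rcases eq_or_ne y 0 with rfl | hy0
  · apply summable_of_ne_finset_zero (s := {0})
    intro n hn
    simp only [Finset.mem_singleton] at hn
    simp [zero_pow hn]
  have hterm : ∀ n : ℕ, ((n : ℝ) + 1) * hgA b c n * y ^ n ≠ 0 := by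
    intro n
    have := hgA_pos hb hc n
    have : ((n:ℝ) + 1) > 0 := by positivity
    positivity
  apply summable_of_ratio_test_tendsto_lt_one hy (Eventually.of_forall hterm)
  have hnorm : ∀ n : ℕ, ‖((n:ℝ) + 1) * hgA b c n * y ^ n‖
      = ((n:ℝ) + 1) * hgA b c n * |y| ^ n := by
    intro n
    have ha := hgA_pos hb hc n
    rw [Real.norm_eq_abs, abs_mul, abs_mul, abs_pow, abs_of_pos ha,
      abs_of_pos (show (0:ℝ) < (n:ℝ)+1 by positivity)]
  have hratio : ∀ n : ℕ,
      ‖(↑(n+1) + 1) * hgA b c (n+1) * y ^ (n+1)‖ / ‖((n:ℝ) + 1) * hgA b c n * y ^ n‖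
        = ((2 + (n:ℝ)) / (1 + n)) * ((b + n) / (c + n)) * |y| := by
    intro n
    have ha := hgA_pos hb hc n
    have hyn : (0:ℝ) < |y| ^ n := by positivity
    have hcn : (0:ℝ) < c + n := by positivity
    rw [hnorm, hnorm, hgA_ratio hb hc n, pow_succ]
    push_cast
    field_simp
    ring
  have := ((tendsto_ratio_aux 2 1 one_pos).mul (tendsto_ratio_aux b c hc)).mul
    (tendsto_const_nhds (x := |y|))
  simp only [one_mul] at this
  push_cast at this ⊢
  refine Tendsto.congr' ?_ this
  filter_upwards with n
  rw [← hratio n]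
  norm_num

lemma hg_summable_pow {b c : ℝ} (hb : 0 < b) (hc : 0 < c) {y : ℝ} (hy : |y| < 1) :
    Summable (fun n : ℕ => hgA b c n * y ^ n) := by
  apply Summable.of_norm_bounded (hg_summable_master hb hc (y := |y|) (by rwa [abs_abs]))
  intro n
  have ha := hgA_pos hb hc n
  rw [Real.norm_eq_abs, abs_mul, abs_pow, abs_of_pos ha]
  have h0 : (0:ℝ) ≤ (n:ℝ) * hgA b c n * |y| ^ n := by positivity
  nlinarith [h0]

lemma hg_summable_mul_pow {b c : ℝ} (hb : 0 < b) (hc : 0 < c) {y : ℝ} (hy : |y| < 1) :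
    Summable (fun n : ℕ => (n:ℝ) * hgA b c n * y ^ n) := by
  apply Summable.of_norm_bounded (hg_summable_master hb hc (y := |y|) (by rwa [abs_abs]))
  intro n
  have ha := hgA_pos hb hc n
  rw [Real.norm_eq_abs, abs_mul, abs_mul, abs_pow, abs_of_pos ha,
    abs_of_nonneg (show (0:ℝ) ≤ (n:ℝ) from n.cast_nonneg)]
  have h0 : (0:ℝ) ≤ hgA b c n * |y| ^ n := by positivity
  nlinarith [h0]

noncomputable def hgS (b c y : ℝ) : ℝ := ∑' n : ℕ, hgA b c n * y ^ n
noncomputable def hgD (b c y : ℝ) : ℝ := ∑' n : ℕ, hgA b c n * ((n : ℝ) * y ^ (n - 1))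

lemma hg_hasDerivAt {b c : ℝ} (hb : 0 < b) (hc : 0 < c) {t : ℝ} (ht : |t| < 1) :
    HasDerivAt (hgS b c) (hgD b c t) t := by
  set r : ℝ := (|t| + 1) / 2 with hrdef
  have hr0 : 0 < r := by positivity
  have hr1 : r < 1 := by rw [hrdef]; linarith
  have htr : |t| < r := by rw [hrdef]; linarith [abs_nonneg t]
  have hrabs : |r| < 1 := by rwa [abs_of_pos hr0]
  have hu : Summable (fun n : ℕ => hgA b c n * ((n : ℝ) * r ^ (n - 1))) := by
    apply Summable.of_nonneg_of_le
      (f := fun n : ℕ => (1/r) * (((n:ℝ) + 1) * hgA b c n * r ^ n))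
    · intro n
      have := hgA_pos hb hc n
      positivity
    · intro n
      cases n with
      | zero =>
        simp only [Nat.cast_zero, zero_mul, mul_zero]
        have := hgA_pos hb hc 0
        positivity
      | succ m =>
        have ha := hgA_pos hb hc (m + 1)
        have hrm : (0:ℝ) < r ^ m := by positivity
        have : hgA b c (m+1) * ((↑(m+1) : ℝ) * r ^ m) ≤
            (1/r) * ((↑(m+1) + 1) * hgA b c (m+1) * r ^ (m+1)) := by
          rw [pow_succ]
          rw [div_mul_eq_mul_div, le_div_iff₀ hr0]
          push_cast
          nlinarith [mul_pos (mul_pos ha hrm) hr0]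
        simpa using this
    · exact ((hg_summable_master hb hc hrabs).mul_left (1/r))
  have key := hasDerivAt_tsum_of_isPreconnected hu (isOpen_Ioo (a := -r) (b := r))
    (isPreconnected_Ioo)
    (g := fun n y => hgA b c n * y ^ n)
    (g' := fun n y => hgA b c n * ((n:ℝ) * y ^ (n - 1)))
    (fun n y _ => (hasDerivAt_pow n y).const_mul (hgA b c n))
    (fun n y hy => by
      have ha := hgA_pos hb hc n
      have hyr : |y| ≤ r := by
        rw [abs_le]; exact ⟨(hy.1).le, (hy.2).le⟩
      rw [Real.norm_eq_abs, abs_mul, abs_mul, abs_pow, abs_of_pos ha,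
        abs_of_nonneg (n.cast_nonneg (α := ℝ))]
      have hle : |y| ^ (n - 1) ≤ r ^ (n - 1) := pow_le_pow_left₀ (abs_nonneg y) hyr _
      have hn : (0:ℝ) ≤ (n:ℝ) := n.cast_nonneg
      exact mul_le_mul_of_nonneg_left (mul_le_mul_of_nonneg_left hle hn) ha.le)
    (show (0:ℝ) ∈ Ioo (-r) r by constructor <;> [linarith; exact hr0])
    (hg_summable_pow hb hc (y := 0) (by simp))
    (show t ∈ Ioo (-r) r from abs_lt.mp htr)
  exact key

lemma hg_ode {b c : ℝ} (hb : 0 < b) (hc : 1 < c) {t : ℝ} (ht0 : 0 ≤ t) (ht1 : t < 1) :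
    t * (1 - t) * hgD b c t + ((c - 1) - b * t) * hgS b c t = c - 1 := by
  have hc' : 0 < c := by linarith
  have habs : |t| < 1 := by rw [abs_of_nonneg ht0]; exact ht1
  have hB : Summable (fun n : ℕ => hgA b c n * t ^ n) := hg_summable_pow hb hc' habs
  have hA : Summable (fun n : ℕ => (n:ℝ) * hgA b c n * t ^ n) := hg_summable_mul_pow hb hc' habs
  have hA' : Summable (fun n : ℕ => (n:ℝ) * hgA b c n * t ^ (n+1)) := by
    apply Summable.congr (hA.mul_left t)
    intro n; rw [pow_succ]; ring
  have hB' : Summable (fun n : ℕ => hgA b c n * t ^ (n+1)) := by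
    apply Summable.congr (hB.mul_left t)
    intro n; rw [pow_succ]; ring
  have hf : Summable (fun n : ℕ => ((n:ℝ) + c - 1) * hgA b c n * t ^ n) := by
    apply Summable.congr (hA.add (hB.mul_left (c-1)))
    intro n; ring
  have e1 : t * hgD b c t = ∑' n : ℕ, (n:ℝ) * hgA b c n * t ^ n := by
    rw [hgD, ← tsum_mul_left]
    apply tsum_congr; intro n
    cases n with
    | zero => simp
    | succ m =>
      push_cast
      rw [pow_succ]
      ring
  have e2 : t * hgS b c t = ∑' n : ℕ, hgA b c n * t ^ (n+1) := by
    rw [hgS, ← tsum_mul_left]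
    apply tsum_congr; intro n; rw [pow_succ]; ring
  have e3 : t * (∑' n : ℕ, (n:ℝ) * hgA b c n * t ^ n)
      = ∑' n : ℕ, (n:ℝ) * hgA b c n * t ^ (n+1) := by
    rw [← tsum_mul_left]
    apply tsum_congr; intro n; rw [pow_succ]; ring
  have e4 : (∑' n : ℕ, (n:ℝ) * hgA b c n * t ^ n) + (c - 1) * hgS b c t
      = ∑' n : ℕ, ((n:ℝ) + c - 1) * hgA b c n * t ^ n := by
    rw [hgS, ← tsum_mul_left, ← Summable.tsum_add hA (hB.mul_left (c-1))]
    apply tsum_congr; intro n; ring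
  have e5 : (∑' n : ℕ, (n:ℝ) * hgA b c n * t ^ (n+1)) + b * (∑' n : ℕ, hgA b c n * t ^ (n+1))
      = ∑' n : ℕ, ((↑(n+1) : ℝ) + c - 1) * hgA b c (n+1) * t ^ (n+1) := by
    rw [← tsum_mul_left, ← Summable.tsum_add hA' (hB'.mul_left b)]
    apply tsum_congr; intro n
    have hr := hgA_rec hb hc' n
    push_cast
    linear_combination (-(t ^ (n+1))) * hr
  have e6 : (∑' n : ℕ, ((n:ℝ) + c - 1) * hgA b c n * t ^ n)
      = (c - 1) + ∑' n : ℕ, ((↑(n+1) : ℝ) + c - 1) * hgA b c (n+1) * t ^ (n+1) := by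
    rw [Summable.tsum_eq_zero_add hf]
    norm_num [hgA_zero]
  linear_combination (1 - t) * e1 + (-b) * e2 + (-1 : ℝ) * e3 + e4 + (-1 : ℝ) * e5 + e6

end HgAux


/-- The Gauss hypergeometric function `₂F₁(a,b;c;x)`. -/
noncomputable def gaussHypergeom (a b c x : ℝ) : ℝ :=
  ∑' k : ℕ, (ascPochhammer ℝ k).eval a * (ascPochhammer ℝ k).eval b /
      (ascPochhammer ℝ k).eval c * x ^ k / (Nat.factorial k)

/-- For `c > 1`, `b - c + 1 > 0` and `0 < x < 1`,
`₂F₁(1,b;c;x) = (c-1)(1-x)^(c-b-1) x^(1-c) B(c-1, b-c+1, x)`. -/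
theorem gaussHypergeom_one_eq_incompleteBeta (b c x : ℝ) (hc : 1 < c) (hbc : 0 < b - c + 1)
    (hx0 : 0 < x) (hx1 : x < 1) :
    gaussHypergeom 1 b c x =
      (c - 1) * (1 - x) ^ (c - b - 1) * x ^ (1 - c) *
        ∫ t in (0:ℝ)..x, t ^ ((c - 1) - 1) * (1 - t) ^ ((b - c + 1) - 1) := by
  have hc0 : (0:ℝ) < c := by linarith
  have hb0 : (0:ℝ) < b := by linarith
  have hc1 : c - 1 ≠ 0 := ne_of_gt (by linarith)
  have h1x : (0:ℝ) < 1 - x := by linarith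
  -- Step A : gaussHypergeom 1 b c x = hgS b c x
  have hstepA : gaussHypergeom 1 b c x = hgS b c x := by
    rw [gaussHypergeom, hgS]
    apply tsum_congr; intro k
    rw [ascPochhammer_eval_one]
    have hk : (k.factorial : ℝ) ≠ 0 := Nat.cast_ne_zero.2 k.factorial_ne_zero
    have hpc : (ascPochhammer ℝ k).eval c ≠ 0 := (ascPochhammer_pos k c hc0).ne'
    rw [hgA]
    field_simp
  -- the antiderivative
  set G : ℝ → ℝ := fun t => t ^ (c-1) * (1-t) ^ (b-c+1) * hgS b c t / (c-1) with hGdef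
  have hInt : IntervalIntegrable (fun t => t ^ (c - 1 - 1) * (1 - t) ^ (b - c + 1 - 1))
      MeasureTheory.volume 0 x := by
    apply IntervalIntegrable.mul_continuousOn (intervalIntegral.intervalIntegrable_rpow' (by linarith))
    intro t ht
    rw [uIcc_of_le hx0.le] at ht
    apply ContinuousAt.continuousWithinAt
    apply ContinuousAt.rpow_const ((continuous_const.sub continuous_id).continuousAt)
    left
    simp only [Pi.sub_apply, id_eq]
    have : t ≤ x := ht.2
    intro h
    have : (1:ℝ) - t > 0 := by linarith
    linarith [this, h.ge]
  have hcontG : ContinuousOn G (Icc 0 x) := by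
    apply ContinuousOn.div_const
    apply ContinuousOn.mul
    apply ContinuousOn.mul
    · intro t ht
      exact (Real.continuousAt_rpow_const t (c-1) (Or.inr (by linarith))).continuousWithinAt
    · intro t ht
      apply ContinuousAt.continuousWithinAt
      apply ContinuousAt.rpow_const ((continuous_const.sub continuous_id).continuousAt)
      right; linarith
    · intro t ht
      have habs : |t| < 1 := by
        rw [abs_lt]; exact ⟨by linarith [ht.1], by linarith [ht.2]⟩
      exact (hg_hasDerivAt hb0 hc0 habs).continuousAt.continuousWithinAt
  have hderiv : ∀ t ∈ Ioo 0 x,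
      HasDerivAt G (t ^ (c - 1 - 1) * (1 - t) ^ (b - c + 1 - 1)) t := by
    intro t ht
    obtain ⟨ht0, htx⟩ := ht
    have htx1 : t < 1 := by linarith
    have h1t : (0:ℝ) < 1 - t := by linarith
    have habs : |t| < 1 := by rw [abs_lt]; constructor <;> linarith
    have d1 : HasDerivAt (fun y : ℝ => y ^ (c-1)) ((c-1) * t ^ (c-1-1)) t :=
      Real.hasDerivAt_rpow_const (Or.inl ht0.ne')
    have d2 : HasDerivAt (fun y : ℝ => (1-y) ^ (b-c+1))
        (-((b-c+1) * (1-t) ^ (b-c+1-1))) t := by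
      have h := Real.hasDerivAt_rpow_const (x := 1-t) (p := b-c+1) (Or.inl h1t.ne')
      have hs : HasDerivAt (fun y : ℝ => 1 - y) (-1) t := (hasDerivAt_id t).const_sub 1
      have := h.comp t hs
      simpa [Function.comp_def] using this
    have d3 : HasDerivAt (hgS b c) (hgD b c t) t := hg_hasDerivAt hb0 hc0 habs
    have dG := ((d1.mul d2).mul d3).div_const (c-1)
    simp only [Pi.mul_apply] at dG
    refine dG.congr_deriv ?_
    have hT : t ^ (c-1) = t ^ (c-1-1) * t := by
      rw [show t ^ (c-1-1) * t = t ^ (c-1-1+1) from (Real.rpow_add_one ht0.ne' _).symm,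
        show c-1-1+1 = c-1 by ring]
    have hU : (1-t) ^ (b-c+1) = (1-t) ^ (b-c+1-1) * (1-t) := by
      rw [show (1-t) ^ (b-c+1-1) * (1-t) = (1-t) ^ (b-c+1-1+1) from
        (Real.rpow_add_one h1t.ne' _).symm, show b-c+1-1+1 = b-c+1 by ring]
    have hode := hg_ode hb0 hc ht0.le htx1
    rw [div_eq_iff hc1, hT, hU]
    linear_combination (t ^ (c-1-1) * (1-t) ^ (b-c+1-1)) * hode
  have hG0 : G 0 = 0 := by
    rw [hGdef]
    simp only
    rw [Real.zero_rpow (by linarith : c - 1 ≠ 0)]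
    ring
  have hFTC := intervalIntegral.integral_eq_sub_of_hasDerivAt_of_le hx0.le hcontG hderiv hInt
  rw [hstepA, hFTC, hG0, sub_zero, hGdef]
  simp only
  have e1 : x ^ (1-c) * x ^ (c-1) = 1 := by
    rw [← Real.rpow_add hx0, show (1-c)+(c-1) = 0 by ring, Real.rpow_zero]
  have e2 : (1-x) ^ (c-b-1) * (1-x) ^ (b-c+1) = 1 := by
    rw [← Real.rpow_add h1x, show (c-b-1)+(b-c+1) = 0 by ring, Real.rpow_zero]
  have : (c-1) * (1-x) ^ (c-b-1) * x ^ (1-c) *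
      (x ^ (c-1) * (1-x) ^ (b-c+1) * hgS b c x / (c-1))
      = ((c-1)/(c-1)) * ((1-x) ^ (c-b-1) * (1-x) ^ (b-c+1)) * (x ^ (1-c) * x ^ (c-1))
        * hgS b c x := by ring
  rw [this, e1, e2, div_self hc1]
  ring
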